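/- Let X be a compact Hausdorff space and μ a finite regular Borel measure on X with full support. If f : X → ℝ is bounded and its set of discontinuity points is a μ-null set, then disc(f) is a meager set; in particular the set of continuity points of f is dense in X. -/

import Mathlib

open MeasureTheory Set

/-- The sublevel set of oscillation is open. -/
lemma isOpen_oscillation_lt {X : Type*} [TopologicalSpace X] (f : X → ℝ) (ε : ENNReal) :
    IsOpen {x | oscillation f x < ε} := by
  rw [isOpen_iff_mem_nhds]
  intro x hx
  simp only [mem_setOf_eq, oscillation, iInf_lt_iff] at hx
  obtain ⟨S, hS, hSd⟩ := hx
  rcases mem_nhds_iff.1 hS with ⟨U, hUS, hUo, hxU⟩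
  filter_upwards [hUo.mem_nhds hxU] with y hy
  have : S ∈ (nhds y).map f := Filter.mem_map.2 (Filter.mem_of_superset (hUo.mem_nhds hy) hUS)
  calc oscillation f y ≤ EMetric.diam S := biInf_le _ this
    _ < ε := hSd

theorem disc_meager {X : Type*} [TopologicalSpace X] [CompactSpace X] [T2Space X]
    [MeasurableSpace X] [BorelSpace X]
    (μ : Measure X) [IsFiniteMeasure μ]
    (hreg : ∀ A : Set X, MeasurableSet A → ∀ ε > (0 : ℝ),
      ∃ F G : Set X, IsClosed F ∧ IsOpen G ∧ F ⊆ A ∧ A ⊆ G ∧ (μ (G \ F)).toReal < ε)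
    (hsupp : ∀ U : Set X, IsOpen U → U.Nonempty → 0 < μ U)
    (f : X → ℝ) (hf : ∃ C, ∀ x, |f x| ≤ C)
    (hnull : μ {x | ¬ ContinuousAt f x} = 0) :
    IsMeagre {x | ¬ ContinuousAt f x} ∧ Dense {x | ContinuousAt f x} := by
  set D := {x | ¬ ContinuousAt f x} with hD
  set F : ℕ → Set X := fun n => {x | ((n : ENNReal))⁻¹ ≤ oscillation f x} with hF
  have hFclosed : ∀ n, IsClosed (F n) := by
    intro n
    have : F n = {x | oscillation f x < ((n : ENNReal))⁻¹}ᶜ := by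
      ext x; simp [hF, not_lt]
    rw [this]
    exact (isOpen_oscillation_lt f _).isClosed_compl
  have hFD : ∀ n, F n ⊆ D := by
    intro n x hx hcont
    have h0 : oscillation f x = 0 := ContinuousAt.oscillation_eq_zero hcont
    have hle : ((n : ENNReal))⁻¹ ≤ 0 := h0 ▸ hx
    exact (ENNReal.inv_ne_zero.2 (ENNReal.natCast_ne_top n)) (le_antisymm hle zero_le)
  have hDF : D ⊆ ⋃ n, F n := by
    intro x hx
    have h0 : oscillation f x ≠ 0 := fun h =>
      hx ((Oscillation.eq_zero_iff_continuousAt f x).1 h)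
    obtain ⟨n, hn⟩ := ENNReal.exists_inv_nat_lt h0
    exact mem_iUnion.2 ⟨n, hn.le⟩
  have hFnd : ∀ n, IsNowhereDense (F n) := by
    intro n
    rw [(hFclosed n).isNowhereDense_iff]
    by_contra h
    obtain ⟨x, hx⟩ := nonempty_iff_ne_empty.2 h
    have hpos : 0 < μ (interior (F n)) := hsupp _ isOpen_interior ⟨x, hx⟩
    have hle : μ (interior (F n)) ≤ μ D :=
      measure_mono (interior_subset.trans (hFD n))
    rw [hnull] at hle
    exact absurd (hpos.trans_le hle) (lt_irrefl 0)
  have hFmeagre : ∀ n, IsMeagre (F n) := by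
    intro n
    rw [IsMeagre]
    exact residual_of_dense_open (hFclosed n).isOpen_compl
      (((isClosed_isNowhereDense_iff_compl).1 ⟨hFclosed n, hFnd n⟩).2)
  have hmeagre : IsMeagre D := (isMeagre_iUnion hFmeagre).mono hDF
  refine ⟨hmeagre, ?_⟩
  have : {x | ContinuousAt f x} = Dᶜ := by ext x; simp [hD]
  rw [this]
  exact dense_of_mem_residual hmeagre
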